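/- Let N be a positive natural number, w : Fin N → Fin N → ℝ be symmetric (w i j = w j i) and nonnegative (w i j ≥ 0), and suppose the support graph of w is connected. Then for every a : Fin N → ℝ, there exists z : Fin N → ℝ such that a i + ∑_{j ≠ i} w i j * (z i − z j) ≤ 0 for every i, if and only if ∑_i a i ≤ 0. -/

import Mathlib

/-- The support graph of the weight function `w`: distinct vertices `i`, `j` are
adjacent if and only if `w i j > 0` (for symmetric `w`). -/
def supportGraph {N : ℕ} (w : Fin N → Fin N → ℝ) : SimpleGraph (Fin N) :=
  SimpleGraph.fromRel (fun i j => 0 < w i j)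

namespace WMDaux

/-- The weighted Laplacian as a linear map. -/
noncomputable def lap {N : ℕ} (w : Fin N → Fin N → ℝ) :
    (Fin N → ℝ) →ₗ[ℝ] (Fin N → ℝ) where
  toFun z := fun i => ∑ j, w i j * (z i - z j)
  map_add' x y := by
    funext i
    simp only [Pi.add_apply]
    rw [← Finset.sum_add_distrib]
    refine Finset.sum_congr rfl fun j _ => ?_
    ring
  map_smul' c x := by
    funext i
    simp only [RingHom.id_apply, Pi.smul_apply, smul_eq_mul, Finset.mul_sum]
    refine Finset.sum_congr rfl fun j _ => ?_
    ring

lemma sum_swap {N : ℕ} (w : Fin N → Fin N → ℝ) (hsymm : ∀ i j, w i j = w j i)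
    (f : Fin N → Fin N → ℝ) :
    ∑ i, ∑ j, w i j * f i j = ∑ i, ∑ j, w i j * f j i := by
  rw [Finset.sum_comm]
  refine Finset.sum_congr rfl fun i _ => Finset.sum_congr rfl fun j _ => ?_
  rw [hsymm j i]

lemma sum_lap {N : ℕ} (w : Fin N → Fin N → ℝ) (hsymm : ∀ i j, w i j = w j i)
    (z : Fin N → ℝ) : ∑ i, lap w z i = 0 := by
  have h : ∑ i, lap w z i = ∑ i, ∑ j, w i j * (z i - z j) := rfl
  have h2 := sum_swap w hsymm (fun i j => z i - z j)
  have h3 : (∑ i, ∑ j, w i j * (z j - z i)) = -∑ i, ∑ j, w i j * (z i - z j) := by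
    rw [← Finset.sum_neg_distrib]
    refine Finset.sum_congr rfl fun i _ => ?_
    rw [← Finset.sum_neg_distrib]
    refine Finset.sum_congr rfl fun j _ => ?_
    ring
  rw [h]
  linarith [h2, h3]

/-- constant functions are in the kernel -/
lemma lap_const {N : ℕ} (w : Fin N → Fin N → ℝ) (c : ℝ) :
    lap w (fun _ => c) = 0 := by
  funext i
  simp [lap]

lemma ker_lap_const {N : ℕ} (w : Fin N → Fin N → ℝ)
    (hsymm : ∀ i j, w i j = w j i) (hnonneg : ∀ i j, 0 ≤ w i j)
    (hconn : (supportGraph w).Connected) (z : Fin N → ℝ)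
    (hz : lap w z = 0) : ∀ i j, z i = z j := by
  -- key energy identity
  have hA : ∑ i, ∑ j, w i j * ((z i - z j) * z i) = 0 := by
    have : ∀ i, (∑ j, w i j * ((z i - z j) * z i)) = (lap w z i) * z i := by
      intro i
      simp only [lap, LinearMap.coe_mk, AddHom.coe_mk]
      rw [Finset.sum_mul]
      exact Finset.sum_congr rfl fun j _ => by ring
    rw [Finset.sum_congr rfl fun i _ => this i]
    simp [hz]
  have hB : ∑ i, ∑ j, w i j * ((z i - z j) * z j)
      = -∑ i, ∑ j, w i j * ((z i - z j) * z i) := by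
    rw [sum_swap w hsymm (fun i j => (z i - z j) * z j)]
    rw [← Finset.sum_neg_distrib]
    refine Finset.sum_congr rfl fun i _ => ?_
    rw [← Finset.sum_neg_distrib]
    refine Finset.sum_congr rfl fun j _ => ?_
    ring
  have hE : ∑ i, ∑ j, w i j * (z i - z j) ^ 2 = 0 := by
    have : ∑ i, ∑ j, w i j * (z i - z j) ^ 2
        = ∑ i, ∑ j, (w i j * ((z i - z j) * z i) - w i j * ((z i - z j) * z j)) := by
      refine Finset.sum_congr rfl fun i _ => Finset.sum_congr rfl fun j _ => ?_
      ring
    rw [this]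
    simp only [Finset.sum_sub_distrib]
    rw [hB, hA]
    ring
  -- each term vanishes
  have hterm : ∀ i j, w i j * (z i - z j) ^ 2 = 0 := by
    have hnn : ∀ i ∈ Finset.univ, (0:ℝ) ≤ ∑ j, w i j * (z i - z j) ^ 2 := by
      intro i _
      exact Finset.sum_nonneg fun j _ =>
        mul_nonneg (hnonneg i j) (sq_nonneg _)
    have h1 := (Finset.sum_eq_zero_iff_of_nonneg hnn).mp hE
    intro i j
    have h2 := h1 i (Finset.mem_univ i)
    have hnn2 : ∀ j ∈ Finset.univ, (0:ℝ) ≤ w i j * (z i - z j) ^ 2 := fun j _ =>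
      mul_nonneg (hnonneg i j) (sq_nonneg _)
    exact (Finset.sum_eq_zero_iff_of_nonneg hnn2).mp h2 j (Finset.mem_univ j)
  -- adjacent vertices have equal values
  have hadj : ∀ i j, (supportGraph w).Adj i j → z i = z j := by
    intro i j hij
    rw [supportGraph, SimpleGraph.fromRel_adj] at hij
    have hw : 0 < w i j := by
      rcases hij.2 with h | h
      · exact h
      · rw [hsymm]; exact h
    have := hterm i j
    have hsq : (z i - z j) ^ 2 = 0 := by
      rcases mul_eq_zero.mp this with h | h
      · linarith
      · exact h
    have := pow_eq_zero_iff (n := 2) (by norm_num) |>.mp hsq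
    linarith [sub_eq_zero.mp this]
  -- connectivity
  intro i j
  have hr := hconn.preconnected i j
  obtain ⟨p⟩ := hr
  induction p with
  | nil => rfl
  | cons h p ih => exact (hadj _ _ h).trans ih

/-- the sum functional -/
noncomputable def sLM (N : ℕ) : (Fin N → ℝ) →ₗ[ℝ] ℝ :=
  ∑ i, LinearMap.proj i

lemma sLM_apply {N : ℕ} (z : Fin N → ℝ) : sLM N z = ∑ i, z i := by
  simp [sLM]

end WMDaux

/-- Weighted, topology-dependent mismatch-variable decoupling principle: under a
connected support graph with symmetric nonnegative weights, the coupled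
inequality `∑ i, a i ≤ 0` can be split exactly into per-agent local
inequalities using weighted mismatch variables. -/
theorem weighted_mismatch_decoupling (N : ℕ) (hN : 0 < N)
    (w : Fin N → Fin N → ℝ)
    (hsymm : ∀ i j, w i j = w j i) (hnonneg : ∀ i j, 0 ≤ w i j)
    (hconn : (supportGraph w).Connected) (a : Fin N → ℝ) :
    (∃ z : Fin N → ℝ,
        ∀ i : Fin N, a i + ∑ j ∈ Finset.univ.erase i, w i j * (z i - z j) ≤ 0)
      ↔ ∑ i, a i ≤ 0 := by
  classical
  open WMDaux in
  -- erase = full sum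
  have herase : ∀ (z : Fin N → ℝ) (i : Fin N),
      ∑ j ∈ Finset.univ.erase i, w i j * (z i - z j) = lap w z i := by
    intro z i
    have h0 : w i i * (z i - z i) = 0 := by ring
    exact Finset.sum_erase _ h0
  constructor
  · rintro ⟨z, hz⟩
    have hsum : ∑ i, (a i + ∑ j ∈ Finset.univ.erase i, w i j * (z i - z j)) ≤ 0 :=
      Finset.sum_nonpos fun i _ => hz i
    have : ∑ i, (a i + ∑ j ∈ Finset.univ.erase i, w i j * (z i - z j))
        = ∑ i, a i + ∑ i, lap w z i := by
      rw [Finset.sum_add_distrib]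
      congr 1
      exact Finset.sum_congr rfl fun i _ => herase z i
    rw [this, WMDaux.sum_lap w hsymm z, add_zero] at hsum
    exact hsum
  · intro ha
    -- dimension count: range (lap w) = ker (sLM N)
    have hNne : (N : ℝ) ≠ 0 := Nat.cast_ne_zero.mpr hN.ne'
    set L := WMDaux.lap w with hL
    set S := WMDaux.sLM N with hS
    have hker : LinearMap.ker L = LinearMap.range (LinearMap.id.smulRight (fun _ => (1:ℝ)) :
        ℝ →ₗ[ℝ] (Fin N → ℝ)) := by
      ext z
      simp only [LinearMap.mem_ker, LinearMap.mem_range, LinearMap.smulRight_apply,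
        LinearMap.id_coe, id_eq]
      constructor
      · intro hz
        refine ⟨z ⟨0, hN⟩, funext fun j => ?_⟩
        have := WMDaux.ker_lap_const w hsymm hnonneg hconn z hz ⟨0, hN⟩ j
        simp [Pi.smul_apply, smul_eq_mul, ← this]
      · rintro ⟨c, rfl⟩
        have := WMDaux.lap_const w c
        convert this using 2
        funext j
        simp
    have hinj : Function.Injective (LinearMap.id.smulRight (fun _ => (1:ℝ)) :
        ℝ →ₗ[ℝ] (Fin N → ℝ)) := by
      intro x y hxy
      have := congrFun hxy ⟨0, hN⟩
      simpa using this
    have hkerdim : Module.finrank ℝ (LinearMap.ker L) = 1 := by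
      rw [hker, LinearMap.finrank_range_of_inj hinj, Module.finrank_self]
    have hVdim : Module.finrank ℝ (Fin N → ℝ) = N := by
      simp [Module.finrank_fin_fun]
    have hSsurj : Function.Surjective S := by
      intro c
      refine ⟨fun _ => c / N, ?_⟩
      rw [hS, WMDaux.sLM_apply]
      simp [Finset.sum_const, Finset.card_univ]
      field_simp
    have hSker : Module.finrank ℝ (LinearMap.ker S) = N - 1 := by
      have h1 := LinearMap.finrank_range_add_finrank_ker S
      rw [hVdim] at h1
      rw [LinearMap.range_eq_top.mpr hSsurj] at h1
      have h2 : Module.finrank ℝ (⊤ : Submodule ℝ ℝ) = 1 := by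
        simp [Module.finrank_self]
      omega
    have hLrange : Module.finrank ℝ (LinearMap.range L) = N - 1 := by
      have h1 := LinearMap.finrank_range_add_finrank_ker L
      rw [hVdim, hkerdim] at h1
      omega
    have hle : LinearMap.range L ≤ LinearMap.ker S := by
      rintro _ ⟨z, rfl⟩
      rw [LinearMap.mem_ker, hS, WMDaux.sLM_apply]
      exact WMDaux.sum_lap w hsymm z
    have heq : LinearMap.range L = LinearMap.ker S :=
      Submodule.eq_of_le_of_finrank_le hle (by rw [hSker, hLrange])
    -- target vector
    set c : Fin N → ℝ := fun i => (∑ i, a i) / N - a i with hc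
    have hcmem : c ∈ LinearMap.ker S := by
      rw [LinearMap.mem_ker, hS, WMDaux.sLM_apply, hc]
      simp only [Finset.sum_sub_distrib, Finset.sum_const, Finset.card_univ,
        Fintype.card_fin, nsmul_eq_mul]
      field_simp
      ring
    rw [← heq] at hcmem
    obtain ⟨z, hzc⟩ := hcmem
    refine ⟨z, fun i => ?_⟩
    rw [herase z i]
    have : L z i = c i := by rw [hzc]
    rw [hL] at this
    rw [this, hc]
    have : (∑ i, a i) / N ≤ 0 := div_nonpos_iff.mpr (Or.inr ⟨ha, Nat.cast_nonneg N⟩)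
    linarith
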